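/- Let P(x,ε) be a monic Weierstrass polynomial of degree k+1 in x with P(x,0) = x^{k+1}, and Q(x,ε) analytic with Q(0,0) contributing order m in x at ε=0. For the Weierstrass decomposition Q = q·(U + P·f) with q, U polynomials in x of degrees m and k respectively, u(0,0)≠0, and f analytic, the polynomial Q̃ := q·U is the unique polynomial in x of degree ≤ k+m with Q/Q̃ ≡ 1 modulo P·ℂ{x,ε} (i.e. Q − Q̃ ∈ Q̃·P·ℂ{x,ε} up to units), equivalently Q̃ is the unique such polynomial with Q ≡ Q̃·(1 + P·g) for some analytic g. -/

import Mathlib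

open PowerSeries

private lemma poly_coe_sub {R : Type*} [CommRing R] (p r : Polynomial R) :
    ((p - r : Polynomial R) : PowerSeries R) = (p : PowerSeries R) - (r : PowerSeries R) := by
  rw [← Polynomial.coeToPowerSeries.ringHom_apply, map_sub]
  simp

/-- Key Weierstrass-division uniqueness lemma: if `w` is a distinguished monic polynomial of
degree `d` (all lower coefficients have zero constant term) and `↑w * t` has vanishing
coefficients in degrees `≥ d`, then `t = 0`. -/
private lemma aux_key {lp : ℕ} (d : ℕ) (w : Polynomial (MvPowerSeries (Fin lp) ℂ))
    (hmon : w.Monic) (hdeg : w.natDegree = d)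
    (hw : ∀ i, i < d → (MvPowerSeries.constantCoeff : MvPowerSeries (Fin lp) ℂ →+* ℂ) (w.coeff i) = 0)
    (t : PowerSeries (MvPowerSeries (Fin lp) ℂ))
    (h : ∀ j, d ≤ j →
      PowerSeries.coeff j ((w : PowerSeries (MvPowerSeries (Fin lp) ℂ)) * t) = 0) :
    t = 0 := by
  have hword : ∀ i, i < d → (1 : ℕ∞) ≤ (w.coeff i).order := by
    intro i hi
    apply MvPowerSeries.le_order
    intro s hs
    have hs' : Finsupp.degree s < 1 := by exact_mod_cast hs
    have hs0 : s = 0 := (Finsupp.degree_eq_zero_iff s).mp (Nat.lt_one_iff.mp hs')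
    subst hs0
    simpa using hw i hi
  have main : ∀ N : ℕ, ∀ n : ℕ, (N : ℕ∞) ≤ (PowerSeries.coeff n t).order := by
    intro N
    induction N with
    | zero => intro n; exact_mod_cast zero_le
    | succ N ih =>
      intro n
      apply MvPowerSeries.le_order
      intro s hs
      have hrel := h (n + d) (by omega)
      rw [PowerSeries.coeff_mul] at hrel
      have hmem : ((d, n) : ℕ × ℕ) ∈ Finset.HasAntidiagonal.antidiagonal (n + d) := by
        simp [Nat.add_comm]
      rw [← Finset.add_sum_erase _ _ hmem] at hrel
      have hco : PowerSeries.coeff (d, n).1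
          (w : PowerSeries (MvPowerSeries (Fin lp) ℂ)) = 1 := by
        rw [Polynomial.coeff_coe]
        simpa [hdeg] using hmon.coeff_natDegree
      rw [hco, one_mul] at hrel
      have hcn : PowerSeries.coeff n t
          = - ∑ p ∈ (Finset.HasAntidiagonal.antidiagonal (n + d)).erase (d, n),
              PowerSeries.coeff p.1 (w : PowerSeries (MvPowerSeries (Fin lp) ℂ))
                * PowerSeries.coeff p.2 t :=
        eq_neg_of_add_eq_zero_left hrel
      rw [hcn, map_neg, map_sum, neg_eq_zero]
      apply Finset.sum_eq_zero
      intro p hp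
      have hps : p.1 + p.2 = n + d := Finset.HasAntidiagonal.mem_antidiagonal.mp (Finset.mem_of_mem_erase hp)
      have hpne : p ≠ (d, n) := Finset.ne_of_mem_erase hp
      rw [Polynomial.coeff_coe]
      rcases lt_trichotomy p.1 d with h1 | h1 | h1
      · apply MvPowerSeries.coeff_of_lt_order
        have hp2 : p.2 = n + d - p.1 := by omega
        have hbound : ((N : ℕ∞) + 1)
            ≤ (w.coeff p.1 * PowerSeries.coeff p.2 t).order := by
          refine le_trans ?_ MvPowerSeries.le_order_mul
          rw [add_comm]
          exact add_le_add (hword p.1 h1) (ih p.2)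
        refine lt_of_lt_of_le (lt_of_lt_of_le hs ?_) hbound
        push_cast
        exact le_refl _
      · exact absurd (Prod.ext h1 (by omega)) hpne
      · rw [Polynomial.coeff_eq_zero_of_natDegree_lt (by omega), zero_mul, map_zero]
  have hzero : ∀ n, PowerSeries.coeff n t = 0 := by
    intro n
    rw [← MvPowerSeries.order_eq_top_iff]
    by_contra hne
    have hN := ENat.coe_toNat hne
    set N := ((PowerSeries.coeff n t).order).toNat with hNdef
    have hle := main (N + 1) n
    rw [← hN] at hle
    have hcon : N + 1 ≤ N := by exact_mod_cast hle
    omega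
  exact PowerSeries.ext hzero

/-- Weierstrass setup: `P` monic of degree `k+1` in `x` with
`P(x,0)=x^{k+1}`, `q` monic Weierstrass of degree `m`, `U` a polynomial of degree
`≤ k` with `U(0,0) ≠ 0`, `f` analytic (formal), and `Q = q(U + Pf)`. Then
`Q̃ := q·U` is the unique polynomial in `x` of degree `≤ k+m` with
`Q ≡ Q̃·(1 + P·g)` for some (formal) `g`. Coefficients are formal power series in
the parameter `ε ∈ ℂˡ`. -/
theorem stmt_15 (lp k m : ℕ)
    (P q U : Polynomial (MvPowerSeries (Fin lp) ℂ))
    (f : PowerSeries (MvPowerSeries (Fin lp) ℂ))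
    (hPmon : P.Monic) (hPdeg : P.natDegree = k + 1)
    (hPw : P.map ((MvPowerSeries.constantCoeff : MvPowerSeries (Fin lp) ℂ →+* ℂ)) = Polynomial.X ^ (k+1))
    (hqmon : q.Monic) (hqdeg : q.natDegree = m)
    (hqw : q.map ((MvPowerSeries.constantCoeff : MvPowerSeries (Fin lp) ℂ →+* ℂ)) = Polynomial.X ^ m)
    (hUdeg : U.natDegree ≤ k)
    (hU0 : (MvPowerSeries.constantCoeff : MvPowerSeries (Fin lp) ℂ →+* ℂ) (U.coeff 0) ≠ 0) :
    (∃ g : PowerSeries (MvPowerSeries (Fin lp) ℂ),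
        (q : PowerSeries (MvPowerSeries (Fin lp) ℂ))
            * ((U : PowerSeries (MvPowerSeries (Fin lp) ℂ))
              + (P : PowerSeries (MvPowerSeries (Fin lp) ℂ)) * f)
          = ((q * U : Polynomial (MvPowerSeries (Fin lp) ℂ))
              : PowerSeries (MvPowerSeries (Fin lp) ℂ))
            * (1 + (P : PowerSeries (MvPowerSeries (Fin lp) ℂ)) * g)) ∧
    (∀ R : Polynomial (MvPowerSeries (Fin lp) ℂ), R.natDegree ≤ k + m →
      ∀ g : PowerSeries (MvPowerSeries (Fin lp) ℂ),
        (q : PowerSeries (MvPowerSeries (Fin lp) ℂ))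
            * ((U : PowerSeries (MvPowerSeries (Fin lp) ℂ))
              + (P : PowerSeries (MvPowerSeries (Fin lp) ℂ)) * f)
          = (R : PowerSeries (MvPowerSeries (Fin lp) ℂ))
            * (1 + (P : PowerSeries (MvPowerSeries (Fin lp) ℂ)) * g) →
        R = q * U) := by
  have hPlow : ∀ i, i < k + 1 → (MvPowerSeries.constantCoeff : MvPowerSeries (Fin lp) ℂ →+* ℂ) (P.coeff i) = 0 := by
    intro i hi
    have := congrArg (fun r => r.coeff i) hPw
    simpa [Polynomial.coeff_map, Polynomial.coeff_X_pow, Nat.ne_of_lt hi] using this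
  have hqlow : ∀ i, i < m → (MvPowerSeries.constantCoeff : MvPowerSeries (Fin lp) ℂ →+* ℂ) (q.coeff i) = 0 := by
    intro i hi
    have := congrArg (fun r => r.coeff i) hqw
    simpa [Polynomial.coeff_map, Polynomial.coeff_X_pow, Nat.ne_of_lt hi] using this
  have hUunit : IsUnit (U : PowerSeries (MvPowerSeries (Fin lp) ℂ)) := by
    rw [PowerSeries.isUnit_iff_constantCoeff, Polynomial.constantCoeff_coe,
      MvPowerSeries.isUnit_iff_constantCoeff]
    exact isUnit_iff_ne_zero.mpr hU0
  obtain ⟨v, hv⟩ := hUunit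
  set g0 : PowerSeries (MvPowerSeries (Fin lp) ℂ) := f * ↑v⁻¹ with hg0
  have hex : (q : PowerSeries (MvPowerSeries (Fin lp) ℂ))
      * ((U : PowerSeries (MvPowerSeries (Fin lp) ℂ))
        + (P : PowerSeries (MvPowerSeries (Fin lp) ℂ)) * f)
      = ((q * U : Polynomial (MvPowerSeries (Fin lp) ℂ))
          : PowerSeries (MvPowerSeries (Fin lp) ℂ))
        * (1 + (P : PowerSeries (MvPowerSeries (Fin lp) ℂ)) * g0) := by
    rw [Polynomial.coe_mul, hg0]
    linear_combination ((q : PowerSeries (MvPowerSeries (Fin lp) ℂ))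
        * (P : PowerSeries (MvPowerSeries (Fin lp) ℂ)) * f
        * (↑v⁻¹ : PowerSeries (MvPowerSeries (Fin lp) ℂ))) * hv
      - ((q : PowerSeries (MvPowerSeries (Fin lp) ℂ))
        * (P : PowerSeries (MvPowerSeries (Fin lp) ℂ)) * f) * v.mul_inv
  refine ⟨⟨g0, hex⟩, ?_⟩
  intro R hR g heq
  have hPne : (P : PowerSeries (MvPowerSeries (Fin lp) ℂ)) ≠ 0 := by
    rw [ne_eq, Polynomial.coe_eq_zero_iff]
    exact hPmon.ne_zero
  set D : Polynomial (MvPowerSeries (Fin lp) ℂ) := R - q * U with hD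
  have hkey1 : ((D : Polynomial (MvPowerSeries (Fin lp) ℂ))
      : PowerSeries (MvPowerSeries (Fin lp) ℂ))
      = (P : PowerSeries (MvPowerSeries (Fin lp) ℂ))
        * ((q : PowerSeries (MvPowerSeries (Fin lp) ℂ))
            * (U : PowerSeries (MvPowerSeries (Fin lp) ℂ)) * g0
          - (R : PowerSeries (MvPowerSeries (Fin lp) ℂ)) * g) := by
    rw [hD, poly_coe_sub, Polynomial.coe_mul]
    rw [Polynomial.coe_mul] at hex
    linear_combination hex - heq
  have hDsplit := Polynomial.modByMonic_add_div D P
  have hrem : D %ₘ P = 0 := by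
    have ht : ((D %ₘ P : Polynomial (MvPowerSeries (Fin lp) ℂ))
        : PowerSeries (MvPowerSeries (Fin lp) ℂ))
        = (P : PowerSeries (MvPowerSeries (Fin lp) ℂ))
          * (((q : PowerSeries (MvPowerSeries (Fin lp) ℂ))
              * (U : PowerSeries (MvPowerSeries (Fin lp) ℂ)) * g0
            - (R : PowerSeries (MvPowerSeries (Fin lp) ℂ)) * g)
            - ((D /ₘ P : Polynomial (MvPowerSeries (Fin lp) ℂ))
              : PowerSeries (MvPowerSeries (Fin lp) ℂ))) := by
      have h1 : ((D %ₘ P : Polynomial (MvPowerSeries (Fin lp) ℂ))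
          : PowerSeries (MvPowerSeries (Fin lp) ℂ))
          = ((D : Polynomial (MvPowerSeries (Fin lp) ℂ))
              : PowerSeries (MvPowerSeries (Fin lp) ℂ))
            - (P : PowerSeries (MvPowerSeries (Fin lp) ℂ))
              * ((D /ₘ P : Polynomial (MvPowerSeries (Fin lp) ℂ))
                : PowerSeries (MvPowerSeries (Fin lp) ℂ)) := by
        have h1' : ((D %ₘ P : Polynomial (MvPowerSeries (Fin lp) ℂ))
            : PowerSeries (MvPowerSeries (Fin lp) ℂ))
            + (P : PowerSeries (MvPowerSeries (Fin lp) ℂ))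
              * ((D /ₘ P : Polynomial (MvPowerSeries (Fin lp) ℂ))
                : PowerSeries (MvPowerSeries (Fin lp) ℂ))
            = ((D : Polynomial (MvPowerSeries (Fin lp) ℂ))
              : PowerSeries (MvPowerSeries (Fin lp) ℂ)) := by
          rw [← Polynomial.coe_mul, ← Polynomial.coe_add, hDsplit]
        linear_combination h1'
      rw [h1, hkey1]
      ring
    have ht0 := aux_key (k + 1) P hPmon hPdeg hPlow
      (((q : PowerSeries (MvPowerSeries (Fin lp) ℂ))
          * (U : PowerSeries (MvPowerSeries (Fin lp) ℂ)) * g0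
        - (R : PowerSeries (MvPowerSeries (Fin lp) ℂ)) * g)
        - ((D /ₘ P : Polynomial (MvPowerSeries (Fin lp) ℂ))
          : PowerSeries (MvPowerSeries (Fin lp) ℂ)))
      (fun j hj => by
        rw [← ht, Polynomial.coeff_coe]
        apply Polynomial.coeff_eq_zero_of_degree_lt
        refine lt_of_lt_of_le (Polynomial.degree_modByMonic_lt D hPmon) ?_
        rw [Polynomial.degree_eq_natDegree hPmon.ne_zero, hPdeg]
        exact_mod_cast hj)
    rw [← Polynomial.coe_eq_zero_iff, ht, ht0, mul_zero]
  have hDPA : D = P * (D /ₘ P) := by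
    conv_lhs => rw [← hDsplit]
    rw [hrem, zero_add]
  set A : Polynomial (MvPowerSeries (Fin lp) ℂ) := D /ₘ P with hAdef
  have hA0 : A = 0 := by
    by_contra hA
    have hdegD : D.natDegree ≤ k + m := by
      refine le_trans (Polynomial.natDegree_sub_le _ _) (max_le hR ?_)
      refine le_trans Polynomial.natDegree_mul_le ?_
      rw [hqdeg]
      omega
    have hdegA : A.natDegree < m := by
      have hmul := Polynomial.natDegree_mul hPmon.ne_zero hA
      rw [← hDPA, hPdeg] at hmul
      omega
    have hRco : (R : PowerSeries (MvPowerSeries (Fin lp) ℂ))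
        = (q : PowerSeries (MvPowerSeries (Fin lp) ℂ))
            * (U : PowerSeries (MvPowerSeries (Fin lp) ℂ))
          + (P : PowerSeries (MvPowerSeries (Fin lp) ℂ))
            * (A : PowerSeries (MvPowerSeries (Fin lp) ℂ)) := by
      have h2 : R = q * U + P * A := by
        rw [← hDPA, hD]
        ring
      rw [h2, Polynomial.coe_add, Polynomial.coe_mul, Polynomial.coe_mul]
    have hunit : IsUnit (1 + (P : PowerSeries (MvPowerSeries (Fin lp) ℂ)) * g) := by
      rw [PowerSeries.isUnit_iff_constantCoeff, map_add, map_mul, map_one,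
        Polynomial.constantCoeff_coe, MvPowerSeries.isUnit_iff_constantCoeff, map_add, map_mul,
        hPlow 0 (by omega), zero_mul, add_zero, map_one]
      exact isUnit_one
    obtain ⟨u, hu⟩ := hunit
    have hrel2 : (A : PowerSeries (MvPowerSeries (Fin lp) ℂ))
        * (1 + (P : PowerSeries (MvPowerSeries (Fin lp) ℂ)) * g)
        = (q : PowerSeries (MvPowerSeries (Fin lp) ℂ))
          * ((U : PowerSeries (MvPowerSeries (Fin lp) ℂ)) * (g0 - g)) := by
      apply mul_left_cancel₀ hPne
      rw [Polynomial.coe_mul] at hex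
      linear_combination hex - heq
        - (1 + (P : PowerSeries (MvPowerSeries (Fin lp) ℂ)) * g) * hRco
    have hinv : (1 + (P : PowerSeries (MvPowerSeries (Fin lp) ℂ)) * g)
        * (↑u⁻¹ : PowerSeries (MvPowerSeries (Fin lp) ℂ)) = 1 := by
      rw [← hu]
      exact u.mul_inv
    have hAq : (A : PowerSeries (MvPowerSeries (Fin lp) ℂ))
        = (q : PowerSeries (MvPowerSeries (Fin lp) ℂ))
          * (((U : PowerSeries (MvPowerSeries (Fin lp) ℂ)) * (g0 - g))
            * (↑u⁻¹ : PowerSeries (MvPowerSeries (Fin lp) ℂ))) := by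
      calc (A : PowerSeries (MvPowerSeries (Fin lp) ℂ))
          = (A : PowerSeries (MvPowerSeries (Fin lp) ℂ))
            * ((1 + (P : PowerSeries (MvPowerSeries (Fin lp) ℂ)) * g)
              * (↑u⁻¹ : PowerSeries (MvPowerSeries (Fin lp) ℂ))) := by rw [hinv, mul_one]
        _ = ((A : PowerSeries (MvPowerSeries (Fin lp) ℂ))
            * (1 + (P : PowerSeries (MvPowerSeries (Fin lp) ℂ)) * g))
              * (↑u⁻¹ : PowerSeries (MvPowerSeries (Fin lp) ℂ)) := by ring
        _ = ((q : PowerSeries (MvPowerSeries (Fin lp) ℂ))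
            * ((U : PowerSeries (MvPowerSeries (Fin lp) ℂ)) * (g0 - g)))
              * (↑u⁻¹ : PowerSeries (MvPowerSeries (Fin lp) ℂ)) := by rw [hrel2]
        _ = _ := by ring
    have ht0 := aux_key m q hqmon hqdeg hqlow
      (((U : PowerSeries (MvPowerSeries (Fin lp) ℂ)) * (g0 - g))
        * (↑u⁻¹ : PowerSeries (MvPowerSeries (Fin lp) ℂ)))
      (fun j hj => by
        rw [← hAq, Polynomial.coeff_coe]
        exact Polynomial.coeff_eq_zero_of_natDegree_lt (lt_of_lt_of_le hdegA hj))
    apply hA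
    rw [← Polynomial.coe_eq_zero_iff, hAq, ht0, mul_zero]
  have hD0 : D = 0 := by rw [hDPA, hA0, mul_zero]
  rw [hD] at hD0
  exact sub_eq_zero.mp hD0
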